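/- Let L be a finite distributive strong upper semilattice, a a minimal element of L, and F, G ∈ D order filters on M. Suppose m, m₁, m₂, m₃ ∈ L satisfy IsGLB ((F ∪ G) ∩ Set.Ici a) m, IsGLB (F ∩ Set.Ici a) m₁, IsGLB (G ∩ Set.Ici a) m₂, and IsGLB {m₁, m₂} m₃. Then m = m₃; that is, f_a(F ∪ G) = f_a(F) ⊓ f_a(G). -/
import Mathlib


/-- A strong upper semilattice: any two elements with a common lower bound
have a greatest lower bound. -/
def StrongUpper (L : Type*) [SemilatticeSup L] : Prop :=
  ∀ x y : L, (∃ z, z ≤ x ∧ z ≤ y) → ∃ w, IsGLB {x, y} w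

/-- Every interval is a distributive lattice. -/
def IntervalDistrib (L : Type*) [SemilatticeSup L] : Prop :=
  ∀ a x y z w w' : L, a ≤ x → a ≤ y → a ≤ z →
    IsGLB {x, y} w → IsGLB {x ⊔ z, y ⊔ z} w' → w' = w ⊔ z

/-- Meet-irreducible element. -/
def MeetIrred {L : Type*} [SemilatticeSup L] [OrderTop L] (m : L) : Prop :=
  m ≠ ⊤ ∧ ∀ p q : L, IsGLB {p, q} m → m = p ∨ m = q

theorem fa_union {L : Type*} [SemilatticeSup L] [OrderTop L] [Finite L]
    (hS : StrongUpper L) (hD : IntervalDistrib L)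
    (a : L) (ha : IsMin a)
    (F G : Set L)
    (hF1 : ∀ m ∈ F, MeetIrred m)
    (hF2 : ∀ m ∈ F, ∀ m', MeetIrred m' → m ≤ m' → m' ∈ F)
    (hG1 : ∀ m ∈ G, MeetIrred m)
    (hG2 : ∀ m ∈ G, ∀ m', MeetIrred m' → m ≤ m' → m' ∈ G)
    (m m₁ m₂ m₃ : L)
    (hm : IsGLB ((F ∪ G) ∩ Set.Ici a) m)
    (hm₁ : IsGLB (F ∩ Set.Ici a) m₁)
    (hm₂ : IsGLB (G ∩ Set.Ici a) m₂)
    (hm₃ : IsGLB {m₁, m₂} m₃) :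
    m = m₃ := by
  have h1 : m₃ ≤ m := by
    apply hm.2
    rintro x ⟨hx, hxa⟩
    rcases hx with hx | hx
    · exact le_trans (le_trans (hm₃.1 (by simp)) (hm₁.1 ⟨hx, hxa⟩)) le_rfl
    · exact le_trans (hm₃.1 (by simp)) (hm₂.1 ⟨hx, hxa⟩)
  have h2 : m ≤ m₃ := by
    apply hm₃.2
    rintro x (rfl | rfl)
    · exact hm₁.2 fun y ⟨hy, hya⟩ => hm.1 ⟨Or.inl hy, hya⟩
    · exact hm₂.2 fun y ⟨hy, hya⟩ => hm.1 ⟨Or.inr hy, hya⟩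
  exact le_antisymm h2 h1
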